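/- Let ψ : 𝔤 → V be a linear kernel vector for the representation (ρ, V) of a Lie algebra 𝔤 over a field 𝔽. Then for all x, y ∈ 𝔤: ρ(x)(ψ([x,y]) − ρ(x)ψ(y)) = 0 and ρ(y)(ψ([x,y]) − ρ(x)ψ(y)) = 0. Consequently, the vector ψ([x,y]) − ρ(x)ψ(y) is annihilated by ρ(z) for every element z of the Lie subalgebra of 𝔤 generated by x and y. -/

import Mathlib

attribute [local instance] LieRing.ofAssociativeRing

/-- If `ψ` is a linear kernel vector for a representation `(ρ, V)` of a Lie algebra `𝔤`
(i.e. `ρ(x)ψ(x) = 0` for all `x`), then `ψ([x,y]) − ρ(x)ψ(y)` is annihilated by `ρ(x)`,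
by `ρ(y)`, and by `ρ(z)` for every `z` in the Lie subalgebra generated by `x` and `y`. -/
theorem linearKernelVector_key {𝔽 : Type*} [Field 𝔽] {𝔤 V : Type*}
    [LieRing 𝔤] [LieAlgebra 𝔽 𝔤] [AddCommGroup V] [Module 𝔽 V]
    (ρ : 𝔤 →ₗ⁅𝔽⁆ Module.End 𝔽 V) (ψ : 𝔤 →ₗ[𝔽] V) (hψ : ∀ x : 𝔤, ρ x (ψ x) = 0)
    (x y : 𝔤) :
    ρ x (ψ ⁅x, y⁆ - ρ x (ψ y)) = 0 ∧
    ρ y (ψ ⁅x, y⁆ - ρ x (ψ y)) = 0 ∧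
    ∀ z ∈ LieSubalgebra.lieSpan 𝔽 𝔤 {x, y}, ρ z (ψ ⁅x, y⁆ - ρ x (ψ y)) = 0 := by
  -- polarization
  have pol : ∀ a b : 𝔤, ρ a (ψ b) = - ρ b (ψ a) := by
    intro a b
    have h := hψ (a + b)
    simp only [map_add, map_add, LinearMap.add_apply, hψ a, hψ b, zero_add, add_zero] at h
    exact eq_neg_of_add_eq_zero_right h
  have hbr : ∀ a b : 𝔤, ρ ⁅a, b⁆ = ρ a * ρ b - ρ b * ρ a := by
    intro a b
    rw [LieHom.map_lie, Ring.lie_def]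
  have h1 : ρ x (ψ ⁅x, y⁆ - ρ x (ψ y)) = 0 := by
    have hp := pol x ⁅x, y⁆
    have hb : ρ ⁅x, y⁆ (ψ x) = - ρ x (ρ x (ψ y)) := by
      rw [hbr x y]
      simp only [LinearMap.sub_apply, Module.End.mul_apply, hψ x, map_zero]
      rw [pol y x]
      simp
    rw [map_sub, hp, hb]
    simp
  have h2 : ρ y (ψ ⁅x, y⁆ - ρ x (ψ y)) = 0 := by
    have hp := pol y ⁅x, y⁆
    have hb : ρ ⁅x, y⁆ (ψ y) = ρ x (ρ y (ψ y)) - ρ y (ρ x (ψ y)) := by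
      rw [hbr x y]; simp [LinearMap.sub_apply, Module.End.mul_apply]
    rw [map_sub, hp, hb, hψ y]
    simp
  refine ⟨h1, h2, ?_⟩
  set v := ψ ⁅x, y⁆ - ρ x (ψ y) with hv
  let S : LieSubalgebra 𝔽 𝔤 :=
  { carrier := {z | ρ z v = 0}
    add_mem' := by
      intro a b ha hb
      simp only [Set.mem_setOf_eq] at *
      rw [map_add, LinearMap.add_apply, ha, hb, add_zero]
    zero_mem' := by simp
    smul_mem' := by
      intro c a ha
      simp only [Set.mem_setOf_eq] at *
      rw [map_smul, LinearMap.smul_apply, ha, smul_zero]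
    lie_mem' := by
      intro a b ha hb
      simp only [Set.mem_setOf_eq] at *
      rw [hbr a b]
      simp only [LinearMap.sub_apply, Module.End.mul_apply, ha, hb, map_zero, sub_zero] }
  intro z hz
  have hsub : {x, y} ⊆ (S : Set 𝔤) := by
    intro a ha
    rcases ha with rfl | ha
    · exact h1
    · rw [Set.mem_singleton_iff] at ha; subst ha; exact h2
  exact (LieSubalgebra.lieSpan_le.mpr hsub) hz
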